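/- Let d ∈ {2,3}, ω > |Ω| ≥ 0, λ ≥ 0, σ > 0 and μ < 0. If φ : ℝ^d → ℂ is a Schwartz-class solution of the stationary equation −(1/2)Δφ + λ|φ|^{2σ}φ + (ω²/2)|x|²φ − Ω Lφ − μφ = 0 on ℝ^d, then φ ≡ 0. -/

import Mathlib

open MeasureTheory Real Complex Filter Topology ENNReal

noncomputable section

/-- Euclidean space `ℝ^d`. -/
abbrev ESp (d : ℕ) := EuclideanSpace ℝ (Fin d)

/-- The `i`-th coordinate of `x ∈ ℝ^d` (zero if out of range); `x_1` is `coord x 0`, etc. -/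
def coord {d : ℕ} (x : ESp d) (i : ℕ) : ℝ := if h : i < d then x ⟨i, h⟩ else 0

/-- Partial derivative `∂_{x_{i+1}} f` (indices starting from `0`; zero if out of range). -/
def pdN {d : ℕ} (i : ℕ) (f : ESp d → ℂ) (x : ESp d) : ℂ :=
  if h : i < d then fderiv ℝ f x (EuclideanSpace.single ⟨i, h⟩ 1) else 0

/-- The Laplacian `Δf = ∑ᵢ ∂ᵢ∂ᵢ f`. -/
def lap {d : ℕ} (f : ESp d → ℂ) (x : ESp d) : ℂ := ∑ i : Fin d, pdN i (pdN i f) x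

/-- The angular momentum operator `Lf = -i (x₁ ∂_{x₂} f - x₂ ∂_{x₁} f)`. -/
def rotL {d : ℕ} (f : ESp d → ℂ) (x : ESp d) : ℂ :=
  -Complex.I * ((coord x 0 : ℂ) * pdN 1 f x - (coord x 1 : ℂ) * pdN 0 f x)

/-- Second derivative at a global maximum is nonpositive. -/
lemma deriv2_nonpos_aux {g g' : ℝ → ℝ} {c : ℝ} (h1 : ∀ t, HasDerivAt g (g' t) t)
    (h2 : HasDerivAt g' c 0) (hmax : ∀ t, g t ≤ g 0) : c ≤ 0 := by
  by_contra h
  push_neg at h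
  have hg'0 : g' 0 = 0 := by
    have hloc : IsLocalMax g 0 := Filter.Eventually.of_forall hmax
    exact hloc.hasDerivAt_eq_zero (h1 0)
  have hslope : Tendsto (slope g' 0) (𝓝[≠] 0) (𝓝 c) :=
    hasDerivAt_iff_tendsto_slope.mp h2
  have hmono : 𝓝[>] (0:ℝ) ≤ 𝓝[≠] (0:ℝ) :=
    nhdsWithin_mono 0 (fun x hx => ne_of_gt hx)
  have hev : ∀ᶠ t in 𝓝[>] (0:ℝ), 0 < slope g' 0 t :=
    (hslope.mono_left hmono).eventually (eventually_gt_nhds h)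
  have hev2 : ∀ᶠ t in 𝓝[>] (0:ℝ), 0 < g' t := by
    filter_upwards [hev, self_mem_nhdsWithin] with t ht ht'
    have hts : slope g' 0 t = g' t / t := by
      simp [slope, hg'0, div_eq_inv_mul]
    rw [hts] at ht
    have ht'' : (0:ℝ) < t := ht'
    exact (div_pos_iff.mp ht).elim (fun h => h.1) (fun h => absurd ht'' (not_lt.mpr h.2.le))
  obtain ⟨u, hu, hsub⟩ := mem_nhdsGT_iff_exists_Ioo_subset.mp hev2
  have hu0 : (0:ℝ) < u := hu
  have hgc : Continuous g := by
    rw [continuous_iff_continuousAt]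
    exact fun t => (h1 t).continuousAt
  have hmono' : StrictMonoOn g (Set.Icc 0 u) := by
    apply strictMonoOn_of_deriv_pos (convex_Icc 0 u) hgc.continuousOn
    intro x hx
    rw [interior_Icc] at hx
    rw [(h1 x).deriv]
    exact hsub hx
  have : g 0 < g u :=
    hmono' (Set.left_mem_Icc.mpr hu0.le) (Set.right_mem_Icc.mpr hu0.le) hu0
  exact absurd (hmax u) (not_le.mpr this)

/-- At a global max of `|f|`, the second directional derivative identity gives
`Re(conj (f x₀) * ∂ᵥ∂ᵥ f) + |∂ᵥ f|² ≤ 0`. -/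
lemma line_second {d : ℕ} (f : EuclideanSpace ℝ (Fin d) → ℂ) (hf : ContDiff ℝ ((⊤:ℕ∞):WithTop ℕ∞) f)
    (x₀ v : EuclideanSpace ℝ (Fin d))
    (hmax : ∀ y, ‖f y‖ ≤ ‖f x₀‖) :
    (f x₀).re * (fderiv ℝ (fun y => fderiv ℝ f y v) x₀ v).re
      + (f x₀).im * (fderiv ℝ (fun y => fderiv ℝ f y v) x₀ v).im
      + Complex.normSq (fderiv ℝ f x₀ v) ≤ 0 := by
  set F : EuclideanSpace ℝ (Fin d) → ℂ := fun y => fderiv ℝ f y v with hF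
  set Q : ℂ := fderiv ℝ F x₀ v with hQ
  have hfd : Differentiable ℝ f := hf.differentiable (by simp)
  have hF_diff : Differentiable ℝ F := by
    have h1 : ContDiff ℝ ((⊤:ℕ∞):WithTop ℕ∞) (fderiv ℝ f) := hf.fderiv_right (by exact_mod_cast le_top)
    exact (h1.clm_apply contDiff_const).differentiable (by simp)
  set L : ℝ → EuclideanSpace ℝ (Fin d) := fun t => x₀ + t • v with hLdef
  have hL0 : L 0 = x₀ := by simp [hLdef]
  have hLd : ∀ t, HasDerivAt L v t := by
    intro t
    have := ((hasDerivAt_id t).smul_const v).const_add x₀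
    rw [one_smul] at this
    exact this
  have hψ : ∀ t, HasDerivAt (fun s => f (L s)) (F (L t)) t := fun t =>
    (hfd (L t)).hasFDerivAt.comp_hasDerivAt t (hLd t)
  have hψ' : HasDerivAt (fun s => F (L s)) Q 0 := by
    have := (hF_diff (L 0)).hasFDerivAt.comp_hasDerivAt 0 (hLd 0)
    rwa [hL0] at this
  set g : ℝ → ℝ := fun t => (f (L t)).re ^ 2 + (f (L t)).im ^ 2 with hgdef
  set g' : ℝ → ℝ := fun t =>
    2 * (f (L t)).re * (F (L t)).re + 2 * (f (L t)).im * (F (L t)).im with hg'def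
  have hre : ∀ t, HasDerivAt (fun s => (f (L s)).re) ((F (L t)).re) t := fun t =>
    (Complex.reCLM.hasFDerivAt.comp_hasDerivAt t (hψ t))
  have him : ∀ t, HasDerivAt (fun s => (f (L s)).im) ((F (L t)).im) t := fun t =>
    (Complex.imCLM.hasFDerivAt.comp_hasDerivAt t (hψ t))
  have hg : ∀ t, HasDerivAt g (g' t) t := by
    intro t
    have := ((hre t).pow 2).add ((him t).pow 2)
    convert this using 1
    all_goals (first | (simp only [hg'def]; ring) | rfl)
  have hre' : HasDerivAt (fun s => (F (L s)).re) (Q.re) 0 :=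
    Complex.reCLM.hasFDerivAt.comp_hasDerivAt 0 hψ'
  have him' : HasDerivAt (fun s => (F (L s)).im) (Q.im) 0 :=
    Complex.imCLM.hasFDerivAt.comp_hasDerivAt 0 hψ'
  have hg' : HasDerivAt g'
      (2 * (F x₀).re * (F x₀).re + 2 * (f x₀).re * Q.re
        + (2 * (F x₀).im * (F x₀).im + 2 * (f x₀).im * Q.im)) 0 := by
    have h1 : HasDerivAt (fun s => 2 * (f (L s)).re * (F (L s)).re)
        (2 * (F (L 0)).re * (F (L 0)).re + 2 * (f (L 0)).re * Q.re) 0 := by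
      have := (((hre 0).const_mul 2).mul hre')
      convert this using 1
      all_goals rfl
    have h2 : HasDerivAt (fun s => 2 * (f (L s)).im * (F (L s)).im)
        (2 * (F (L 0)).im * (F (L 0)).im + 2 * (f (L 0)).im * Q.im) 0 := by
      have := (((him 0).const_mul 2).mul him')
      convert this using 1
      all_goals rfl
    rw [hL0] at h1 h2
    exact h1.add h2
  have hmax' : ∀ t, g t ≤ g 0 := by
    intro t
    have habs : ∀ y, (f y).re ^ 2 + (f y).im ^ 2 = ‖f y‖ ^ 2 := by
      intro y
      rw [Complex.sq_norm, Complex.normSq_apply]; ring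
    simp only [hgdef, hL0, habs]
    exact pow_le_pow_left₀ (norm_nonneg _) (hmax (L t)) 2
  have hkey := deriv2_nonpos_aux hg hg' hmax'
  rw [Complex.normSq_apply]
  nlinarith [hkey]

set_option maxHeartbeats 2000000 in
/-- For `μ < 0` there are no nontrivial Schwartz-class steady states of the
stationary Gross–Pitaevskii equation with rotation. -/
theorem no_nontrivial_steady_states_negative_mu (d : ℕ) (hd : d = 2 ∨ d = 3)
    (ω Ω lam σ mu : ℝ) (hω : |Ω| < ω) (hΩ : 0 ≤ |Ω|) (hlam : 0 ≤ lam) (hσ : 0 < σ)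
    (hmu : mu < 0) (φ : SchwartzMap (ESp d) ℂ)
    (hφ : ∀ x : ESp d,
      -(1/2 : ℂ) * lap (⇑φ) x
        + ((lam * ‖φ x‖ ^ (2*σ) : ℝ) : ℂ) * φ x
        + (((ω^2/2) * ‖x‖^2 : ℝ) : ℂ) * φ x
        - (Ω : ℂ) * rotL (⇑φ) x - (mu : ℂ) * φ x = 0) :
    ∀ x : ESp d, φ x = 0 := by
  intro x
  by_contra hx0
  -- existence of a global maximum of |φ|
  have hcont : Continuous fun y : ESp d => ‖φ y‖ :=
    continuous_norm.comp φ.continuous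
  have hzero : Tendsto (fun y : ESp d => ‖φ y‖) (cocompact _) (𝓝 0) := by
    have h1 : Tendsto (⇑φ) (cocompact (ESp d)) (𝓝 0) := zero_at_infty φ
    have := (continuous_norm.tendsto 0).comp h1
    simpa [Function.comp_def] using this
  have hxpos : 0 < ‖φ x‖ := by
    simpa using hx0
  have hev : ∀ᶠ y in cocompact (ESp d), ‖φ y‖ ≤ ‖φ x‖ :=
    (hzero.eventually (eventually_lt_nhds hxpos)).mono fun y hy => hy.le
  obtain ⟨x₀, hx₀⟩ := hcont.exists_forall_ge' x hev
  have h0d : 0 < d := by omega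
  have h1d : 1 < d := by omega
  set i0 : Fin d := ⟨0, h0d⟩ with hi0
  set i1 : Fin d := ⟨1, h1d⟩ with hi1
  set a : ℂ := φ x₀ with ha
  set p : Fin d → ℂ := fun i => pdN i (⇑φ) x₀ with hp
  set q : Fin d → ℂ := fun i => pdN i (pdN i (⇑φ)) x₀ with hq
  have hApos : 0 < a.re ^ 2 + a.im ^ 2 := by
    have h1 : 0 < ‖a‖ := lt_of_lt_of_le hxpos (hx₀ x)
    have h2 : 0 < Complex.normSq a := by
      rw [← Complex.sq_norm]; positivity
    rw [Complex.normSq_apply] at h2; nlinarith [h2]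
  have key : ∀ i : Fin d,
      a.re * (q i).re + a.im * (q i).im + Complex.normSq (p i) ≤ 0 := by
    intro i
    have hsm : ContDiff ℝ ((⊤:ℕ∞):WithTop ℕ∞) (⇑φ) := φ.smooth ⊤
    have hls := line_second (⇑φ) hsm x₀ (EuclideanSpace.single i 1) hx₀
    have hpd : pdN (i : ℕ) (⇑φ)
        = fun y => fderiv ℝ (⇑φ) y (EuclideanSpace.single i 1) := by
      funext y
      simp [pdN, i.isLt]
    have hqi : q i = fderiv ℝ (fun y => fderiv ℝ (⇑φ) y (EuclideanSpace.single i 1))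
        x₀ (EuclideanSpace.single i 1) := by
      rw [hq]
      simp only [pdN, i.isLt, dif_pos, Fin.eta]
      rw [hpd]
    have hpi : p i = fderiv ℝ (⇑φ) x₀ (EuclideanSpace.single i 1) := by
      rw [hp]; simp [pdN, i.isLt]
    rw [hqi, hpi]
    exact hls
  -- sum bound
  have hne : i0 ≠ i1 := by
    simp [hi0, hi1, Fin.ext_iff]
  have hS : lap (⇑φ) x₀ = ∑ i : Fin d, q i := rfl
  have hconn : a.re * (lap (⇑φ) x₀).re + a.im * (lap (⇑φ) x₀).im
      ≤ -(Complex.normSq (p i0) + Complex.normSq (p i1)) := by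
    have e1 : a.re * (lap (⇑φ) x₀).re + a.im * (lap (⇑φ) x₀).im
        = ∑ i : Fin d, (a.re * (q i).re + a.im * (q i).im) := by
      rw [hS, Complex.re_sum, Complex.im_sum, Finset.mul_sum, Finset.mul_sum,
        ← Finset.sum_add_distrib]
    have e2 : ∑ i : Fin d, (a.re * (q i).re + a.im * (q i).im)
        ≤ ∑ i : Fin d, -(Complex.normSq (p i)) := by
      apply Finset.sum_le_sum
      intro i _
      linarith [key i]
    have e3 : Complex.normSq (p i0) + Complex.normSq (p i1)
        ≤ ∑ i : Fin d, Complex.normSq (p i) := by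
      have := Finset.sum_le_sum_of_subset_of_nonneg
        (Finset.subset_univ ({i0, i1} : Finset (Fin d)))
        (fun i _ _ => Complex.normSq_nonneg (p i))
      rwa [Finset.sum_pair hne] at this
    rw [e1]
    calc ∑ i : Fin d, (a.re * (q i).re + a.im * (q i).im)
        ≤ ∑ i : Fin d, -(Complex.normSq (p i)) := e2
      _ = -∑ i : Fin d, Complex.normSq (p i) := by rw [Finset.sum_neg_distrib]
      _ ≤ -(Complex.normSq (p i0) + Complex.normSq (p i1)) := by linarith [e3]
  -- coordinates
  set X0 : ℝ := coord x₀ 0 with hX0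
  set X1 : ℝ := coord x₀ 1 with hX1
  have hXb : X0 ^ 2 + X1 ^ 2 ≤ ‖x₀‖ ^ 2 := by
    have hnrm : ‖x₀‖ ^ 2 = ∑ i : Fin d, (x₀ i) ^ 2 := by
      rw [EuclideanSpace.norm_eq, Real.sq_sqrt (by positivity)]
      simp [_root_.sq_abs]
    have hx0c : X0 = x₀ i0 := by rw [hX0]; simp [coord, h0d, hi0]
    have hx1c : X1 = x₀ i1 := by rw [hX1]; simp [coord, h1d, hi1]
    rw [hnrm, hx0c, hx1c]
    have := Finset.sum_le_sum_of_subset_of_nonneg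
      (Finset.subset_univ ({i0, i1} : Finset (Fin d)))
      (fun i _ _ => sq_nonneg (x₀ i))
    rwa [Finset.sum_pair hne] at this
  -- rotation term
  have hrot : rotL (⇑φ) x₀ = -Complex.I * ((X0:ℂ) * p i1 - (X1:ℂ) * p i0) := rfl
  -- real part of the equation tested against conj a
  have hC := hφ x₀
  rw [show (-(1/2:ℂ)) = ((-(1/2:ℝ)):ℂ) by norm_num] at hC
  rw [hrot, ← ha] at hC
  have hre0 := congrArg (fun z => ((starRingEnd ℂ) a * z).re) hC
  simp only [mul_zero, Complex.zero_re, mul_add, mul_sub, Complex.add_re, Complex.sub_re,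
    Complex.mul_re, Complex.mul_im, Complex.conj_re, Complex.conj_im, Complex.ofReal_re,
    Complex.ofReal_im, Complex.neg_re, Complex.neg_im, Complex.I_re, Complex.I_im,
    Complex.sub_im, Complex.add_im] at hre0
  have hre1 : -(1/2) * (a.re * (lap (⇑φ) x₀).re + a.im * (lap (⇑φ) x₀).im)
      + (lam * ‖a‖ ^ (2*σ) + ω^2/2*‖x₀‖^2 - mu) * (a.re^2 + a.im^2)
      - Ω * (a.re * (X0*(p i1).im - X1*(p i0).im)
          - a.im * (X0*(p i1).re - X1*(p i0).re)) = 0 := by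
    linear_combination hre0
  have hc1 : 0 ≤ lam * ‖a‖ ^ (2*σ) :=
    mul_nonneg hlam (Real.rpow_nonneg (norm_nonneg a) _)
  have hc1A : 0 ≤ (lam * ‖a‖ ^ (2*σ)) * (a.re^2 + a.im^2) :=
    mul_nonneg hc1 hApos.le
  have hΩ2 : Ω^2 ≤ ω^2 := by nlinarith [_root_.sq_abs Ω, abs_nonneg Ω]
  have hprod : Ω^2*(X0^2+X1^2)*(a.re^2+a.im^2) ≤ ω^2*‖x₀‖^2*(a.re^2+a.im^2) := by
    have h := mul_le_mul hΩ2 hXb (by positivity) (by positivity)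
    exact mul_le_mul_of_nonneg_right h hApos.le
  have hP0 : Complex.normSq (p i0) = (p i0).re^2 + (p i0).im^2 := by
    rw [Complex.normSq_apply]; ring
  have hP1 : Complex.normSq (p i1) = (p i1).re^2 + (p i1).im^2 := by
    rw [Complex.normSq_apply]; ring
  have hmuA : 0 < (-mu) * (a.re^2 + a.im^2) := mul_pos (by linarith) hApos
  nlinarith [hre1, hconn, hc1A, hprod, hmuA, hP0, hP1,
    sq_nonneg (Ω*X0*a.re - (p i1).im), sq_nonneg (Ω*X0*a.im + (p i1).re),
    sq_nonneg (Ω*X1*a.re + (p i0).im), sq_nonneg (Ω*X1*a.im - (p i0).re)]
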